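/- Let H be a Hilbert space, a(·,·) a continuous hermitian sesquilinear form on H with a(w,w) > 0 for all w ≠ 0, and K : H → H* a compact linear operator. If there exists α̃ > 0 such that α̃‖v‖² ≤ Re(a(v,v) + ⟨Kv, v⟩) for all v ∈ H, then there exists α > 0 such that α‖v‖² ≤ a(v,v) for all v ∈ H. -/

import Mathlib

open RCLike Filter Topology


section aux
variable {𝕜 : Type*} [RCLike 𝕜] {H : Type*} [NormedAddCommGroup H]
    [InnerProductSpace 𝕜 H]
    {a : H → H → 𝕜}
    (hherm : ∀ w v, a w v = starRingEnd 𝕜 (a v w))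
    (hlin : ∀ w, IsLinearMap 𝕜 (a w))

include hherm hlin

lemma aux_smul_left (c : 𝕜) (x y : H) :
    a (c • x) y = starRingEnd 𝕜 c * a x y := by
  rw [hherm, (hlin y).map_smul, smul_eq_mul, map_mul, ← hherm]

lemma aux_add_left (x x' y : H) : a (x + x') y = a x y + a x' y := by
  rw [hherm, (hlin y).map_add, map_add, ← hherm, ← hherm]

lemma aux_sub_left (x x' y : H) : a (x - x') y = a x y - a x' y := by
  rw [hherm, (hlin y).map_sub, map_sub, ← hherm, ← hherm]

lemma aux_zero (y : H) : a 0 y = 0 := by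
  rw [hherm, (hlin y).map_zero, map_zero]

lemma aux_expand (s : 𝕜) (x y : H) :
    re (a (x + s • y) (x + s • y)) =
      re (a x x) + 2 * re (s * a x y) + ‖s‖ ^ 2 * re (a y y) := by
  rw [aux_add_left hherm hlin, (hlin x).map_add, (hlin (s • y)).map_add,
    (hlin x).map_smul, (hlin (s • y)).map_smul,
    aux_smul_left hherm hlin, aux_smul_left hherm hlin]
  simp only [smul_eq_mul]
  have h1 : starRingEnd 𝕜 s * a y x = starRingEnd 𝕜 (s * a x y) := by
    rw [map_mul, ← hherm]
  have h2 : s * (starRingEnd 𝕜 s * a y y) = ((‖s‖ ^ 2 : ℝ) : 𝕜) * a y y := by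
    rw [← mul_assoc, RCLike.mul_conj]
    norm_cast
  rw [h1, h2]
  simp only [map_add, RCLike.conj_re, RCLike.re_ofReal_mul]
  ring

lemma aux_cs (hnn : ∀ z : H, 0 ≤ re (a z z)) (x y : H) :
    ‖a x y‖ ^ 2 ≤ re (a x x) * re (a y y) := by
  set N : ℝ := ‖a x y‖ with hN
  set px : ℝ := re (a x x) with hpx
  set py : ℝ := re (a y y) with hpy
  have hQ : ∀ t : ℝ, 0 ≤ (N ^ 2 * py) * (t * t) + (-2 * N ^ 2) * t + px := by
    intro t
    have h := hnn (x + ((-(t : 𝕜)) * starRingEnd 𝕜 (a x y)) • y)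
    rw [aux_expand hherm hlin] at h
    have hre : re (((-(t : 𝕜)) * starRingEnd 𝕜 (a x y)) * a x y) = -t * N ^ 2 := by
      rw [mul_assoc, RCLike.conj_mul]
      have : ((-(t:𝕜)) * (((‖a x y‖ : ℝ) : 𝕜) ^ 2)) = ((-t * ‖a x y‖ ^ 2 : ℝ) : 𝕜) := by
        push_cast; ring
      rw [this, RCLike.ofReal_re, hN]
    have hns : ‖(-(t : 𝕜)) * starRingEnd 𝕜 (a x y)‖ ^ 2 = t ^ 2 * N ^ 2 := by
      rw [norm_mul, RCLike.norm_conj, norm_neg, RCLike.norm_ofReal, mul_pow, sq_abs, hN]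
    rw [hre, hns] at h
    nlinarith [h]
  have hd := discrim_le_zero hQ
  rw [discrim] at hd
  rcases eq_or_lt_of_le (norm_nonneg (a x y)) with h0 | h0
  · have hN0 : N = 0 := by rw [hN, ← h0]
    rw [hN0]
    simpa using mul_nonneg (hnn x) (hnn y)
  · have hN2 : 0 < N ^ 2 := by rw [hN]; positivity
    have h4 : N ^ 2 * N ^ 2 ≤ N ^ 2 * (px * py) := by nlinarith [hd]
    exact le_of_mul_le_mul_left h4 hN2

end aux

/-- Gårding-type ellipticity of the compactly perturbed form plus strict positivity of `a`
implies ellipticity of `a` itself. -/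
theorem stmt3 {𝕜 : Type*} [RCLike 𝕜] {H : Type*} [NormedAddCommGroup H]
    [InnerProductSpace 𝕜 H] [CompleteSpace H]
    (a : H → H → 𝕜) (M : ℝ)
    (hherm : ∀ w v, a w v = starRingEnd 𝕜 (a v w))
    (hlin : ∀ w, IsLinearMap 𝕜 (a w))
    (hcont : ∀ w v, ‖a w v‖ ≤ M * ‖w‖ * ‖v‖)
    (hpos : ∀ w : H, w ≠ 0 → 0 < re (a w w))
    (K : H →L[𝕜] (H →L[𝕜] 𝕜)) (hK : IsCompactOperator fun x => K x)
    (α' : ℝ) (hα' : 0 < α')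
    (hGarding : ∀ v : H, α' * ‖v‖ ^ 2 ≤ re (a v v + K v v)) :
    ∃ α > 0, ∀ v : H, α * ‖v‖ ^ 2 ≤ re (a v v) := by
  by_contra hcon
  push_neg at hcon
  have hnn : ∀ z : H, 0 ≤ re (a z z) := by
    intro z
    rcases eq_or_ne z 0 with rfl | hz
    · rw [aux_zero hherm hlin]; simp
    · exact (hpos z hz).le
  -- a sequence of unit vectors on which a degenerates
  have hseq : ∀ n : ℕ, ∃ u : H, ‖u‖ = 1 ∧ re (a u u) < 1 / (n + 1) := by
    intro n
    obtain ⟨v, hv⟩ := hcon (1 / (n + 1)) (by positivity)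
    have hv0 : v ≠ 0 := by
      rintro rfl
      rw [aux_zero hherm hlin] at hv
      simp at hv
    have hvn : (0:ℝ) < ‖v‖ := norm_pos_iff.mpr hv0
    refine ⟨((‖v‖⁻¹ : ℝ) : 𝕜) • v, ?_, ?_⟩
    · rw [norm_smul, RCLike.norm_ofReal, abs_of_pos (by positivity)]
      field_simp
    · have hs : a (((‖v‖⁻¹ : ℝ) : 𝕜) • v) (((‖v‖⁻¹ : ℝ) : 𝕜) • v)
          = ((‖v‖⁻¹ * ‖v‖⁻¹ : ℝ) : 𝕜) * a v v := by
        rw [(hlin _).map_smul, aux_smul_left hherm hlin, smul_eq_mul,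
          RCLike.conj_ofReal]
        push_cast; ring
      rw [hs, RCLike.re_ofReal_mul]
      have hvv : ‖v‖⁻¹ * ‖v‖⁻¹ * ‖v‖ ^ 2 = 1 := by
        rw [pow_two]
        field_simp
      calc ‖v‖⁻¹ * ‖v‖⁻¹ * re (a v v)
          < ‖v‖⁻¹ * ‖v‖⁻¹ * (1 / (↑n + 1) * ‖v‖ ^ 2) :=
            mul_lt_mul_of_pos_left hv (by positivity)
        _ = 1 / (↑n + 1) * (‖v‖⁻¹ * ‖v‖⁻¹ * ‖v‖ ^ 2) := by ring
        _ = 1 / (n + 1) := by rw [hvv, mul_one]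
  choose w hw1 hw2 using hseq
  have hεlim : Tendsto (fun n => re (a (w n) (w n))) atTop (𝓝 0) :=
    squeeze_zero (fun n => hnn _) (fun n => (hw2 n).le)
      tendsto_one_div_add_atTop_nhds_zero_nat
  -- compactness: extract a subsequence along which K (w n) converges
  have hK' : IsCompactOperator (⇑(K.toLinearMap) : H → (H →L[𝕜] 𝕜)) := hK
  obtain ⟨S, hS, hKS⟩ := hK'.image_closedBall_subset_compact 1
  have hwS : ∀ n, K (w n) ∈ S := by
    intro n
    exact hKS ⟨w n, by simp [Metric.mem_closedBall, dist_zero_right, hw1 n], rfl⟩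
  obtain ⟨f, _, φ, hφ, hKconv⟩ := hS.tendsto_subseq hwS
  -- Cauchy–Schwarz consequence
  have hM : ∀ x y : H, ‖a x y‖ ≤ (re (a x x) + re (a y y)) / 2 := by
    intro x y
    have h := aux_cs hherm hlin hnn x y
    nlinarith [sq_nonneg (re (a x x) - re (a y y)), norm_nonneg (a x y), hnn x, hnn y]
  -- the key estimate
  have hkey : ∀ n m : ℕ, α' * ‖w n - w m‖ ^ 2 ≤
      2 * (re (a (w n) (w n)) + re (a (w m) (w m))) + 2 * ‖K (w n) - K (w m)‖ := by
    intro n m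
    have hg := hGarding (w n - w m)
    rw [map_add] at hg
    have hdd : re (a (w n - w m) (w n - w m)) ≤
        2 * (re (a (w n) (w n)) + re (a (w m) (w m))) := by
      rw [aux_sub_left hherm hlin, (hlin _).map_sub, (hlin _).map_sub]
      have hre : re (a (w m) (w n)) = re (a (w n) (w m)) := by
        rw [hherm (w m) (w n), RCLike.conj_re]
      have h1 : -re (a (w n) (w m)) ≤ ‖a (w n) (w m)‖ := by
        have := RCLike.abs_re_le_norm (a (w n) (w m))
        cases abs_cases (re (a (w n) (w m))) <;> linarith [this]
      have h2 := hM (w n) (w m)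
      simp only [map_sub]
      linarith [hre]
    have hKd : re ((K (w n - w m)) (w n - w m)) ≤ 2 * ‖K (w n) - K (w m)‖ := by
      have h1 := RCLike.re_le_norm ((K (w n - w m)) (w n - w m))
      have h2 := (K (w n - w m)).le_opNorm (w n - w m)
      have h3 : ‖w n - w m‖ ≤ 2 := by
        calc ‖w n - w m‖ ≤ ‖w n‖ + ‖w m‖ := norm_sub_le _ _
          _ = 2 := by rw [hw1, hw1]; norm_num
      have h4 : K (w n - w m) = K (w n) - K (w m) := map_sub K _ _
      rw [h4] at h1 h2 ⊢
      have h5 := mul_le_mul_of_nonneg_left h3 (norm_nonneg (K (w n) - K (w m)))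
      linarith
    linarith
  -- the subsequence is Cauchy
  have hεφ : Tendsto (fun k => re (a (w (φ k)) (w (φ k)))) atTop (𝓝 0) :=
    hεlim.comp hφ.tendsto_atTop
  have hfst : Tendsto (Prod.fst : ℕ × ℕ → ℕ) atTop atTop := by
    rw [← prod_atTop_atTop_eq]
    exact tendsto_fst
  have hsnd : Tendsto (Prod.snd : ℕ × ℕ → ℕ) atTop atTop := by
    rw [← prod_atTop_atTop_eq]
    exact tendsto_snd
  have hcauchy : CauchySeq (fun k => w (φ k)) := by
    rw [cauchySeq_iff_tendsto_dist_atTop_0]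
    apply squeeze_zero (fun p => dist_nonneg)
      (g := fun p : ℕ × ℕ => Real.sqrt ((2 * (re (a (w (φ p.1)) (w (φ p.1))) +
        re (a (w (φ p.2)) (w (φ p.2)))) + 2 * ‖K (w (φ p.1)) - K (w (φ p.2))‖) / α'))
    · intro p
      rw [dist_eq_norm]
      apply Real.le_sqrt_of_sq_le
      rw [le_div_iff₀ hα']
      calc ‖w (φ p.1) - w (φ p.2)‖ ^ 2 * α'
          = α' * ‖w (φ p.1) - w (φ p.2)‖ ^ 2 := by ring
        _ ≤ _ := hkey _ _
    · have h1 : Tendsto (fun p : ℕ × ℕ => re (a (w (φ p.1)) (w (φ p.1)))) atTop (𝓝 0) :=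
        hεφ.comp hfst
      have h2 : Tendsto (fun p : ℕ × ℕ => re (a (w (φ p.2)) (w (φ p.2)))) atTop (𝓝 0) :=
        hεφ.comp hsnd
      have h3 : Tendsto (fun p : ℕ × ℕ => ‖K (w (φ p.1)) - K (w (φ p.2))‖) atTop (𝓝 0) := by
        have h4 := (hKconv.comp hfst).sub (hKconv.comp hsnd)
        rw [sub_self] at h4
        simpa using h4.norm
      have h5 : Tendsto (fun p : ℕ × ℕ => (2 * (re (a (w (φ p.1)) (w (φ p.1))) +
          re (a (w (φ p.2)) (w (φ p.2)))) + 2 * ‖K (w (φ p.1)) - K (w (φ p.2))‖) / α')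
          atTop (𝓝 ((2 * ((0:ℝ) + 0) + 2 * 0) / α')) :=
        (((h1.add h2).const_mul 2).add (h3.const_mul 2)).div_const α'
      have h6 : ((2 * ((0:ℝ) + 0) + 2 * 0) / α') = 0 := by norm_num
      rw [h6] at h5
      have := (Real.continuous_sqrt.tendsto 0).comp h5
      simpa [Function.comp_def] using this
  obtain ⟨v, hv⟩ := cauchySeq_tendsto_of_complete hcauchy
  have hvnorm : ‖v‖ = 1 := by
    have h1 : Tendsto (fun k : ℕ => (1:ℝ)) atTop (𝓝 ‖v‖) := by
      simpa [hw1] using hv.norm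
    exact tendsto_nhds_unique h1 tendsto_const_nhds
  have hav : Tendsto (fun k => re (a (w (φ k)) (w (φ k)))) atTop (𝓝 (re (a v v))) := by
    rw [tendsto_iff_dist_tendsto_zero]
    apply squeeze_zero (fun k => dist_nonneg)
      (g := fun k => M * ‖w (φ k) - v‖ * ‖w (φ k)‖ + M * ‖v‖ * ‖w (φ k) - v‖)
    · intro k
      rw [Real.dist_eq]
      have hsplit : a (w (φ k)) (w (φ k)) - a v v
          = a (w (φ k) - v) (w (φ k)) + a v (w (φ k) - v) := by
        rw [aux_sub_left hherm hlin, (hlin v).map_sub]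
        ring
      calc |re (a (w (φ k)) (w (φ k))) - re (a v v)|
          = |re (a (w (φ k)) (w (φ k)) - a v v)| := by rw [map_sub]
        _ ≤ ‖a (w (φ k)) (w (φ k)) - a v v‖ := RCLike.abs_re_le_norm _
        _ ≤ M * ‖w (φ k) - v‖ * ‖w (φ k)‖ + M * ‖v‖ * ‖w (φ k) - v‖ := by
            rw [hsplit]
            exact (norm_add_le _ _).trans (add_le_add (hcont _ _) (hcont _ _))
    · have hd : Tendsto (fun k => ‖w (φ k) - v‖) atTop (𝓝 0) := by
        have h7 : Tendsto (fun k => w (φ k) - v) atTop (𝓝 (v - v)) :=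
          hv.sub (tendsto_const_nhds (x := v))
        rw [sub_self] at h7
        simpa using h7.norm
      have hn : Tendsto (fun k => ‖w (φ k)‖) atTop (𝓝 ‖v‖) := hv.norm
      have := ((hd.const_mul M).mul hn).add ((hd.const_mul (M * ‖v‖)))
      simpa [mul_assoc, mul_comm, mul_left_comm] using this
  have h0 : re (a v v) = 0 := tendsto_nhds_unique hav hεφ
  have hvne : v ≠ 0 := by
    intro h
    rw [h, norm_zero] at hvnorm
    norm_num at hvnorm
  linarith [hpos v hvne]
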